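/- Let c₁ ≥ c₂ ≥ ... ≥ c_r ≥ 1 be integers summing to q, and let y_q(r) denote the number of such r-tuples (partitions of q into exactly r parts). Then y_q(r+1) ≤ q · y_q(r) for all r ≥ 1. -/

import Mathlib

/-- Merge the head (smallest part) of a sorted list into its last (largest) part. -/
def mergeList (l : List ℕ) : List ℕ :=
  match l with
  | c :: b :: t => (b :: t).dropLast ++ [(b :: t).getLast (List.cons_ne_nil b t) + c]
  | l => l

lemma mergeList_sum (l : List ℕ) : (mergeList l).sum = l.sum := by
  match l with
  | [] => rfl
  | [a] => rfl
  | c :: b :: t =>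
    have h := List.dropLast_append_getLast (l := b :: t) (List.cons_ne_nil b t)
    have h2 : (b :: t).dropLast.sum + (b :: t).getLast (List.cons_ne_nil b t) = (b :: t).sum := by
      conv_rhs => rw [← h]
      simp [List.sum_append]
    have h3 : (b :: t).sum = b + t.sum := by simp
    simp only [mergeList, List.sum_append, List.sum_cons, List.sum_nil]
    omega

lemma mergeList_mem {l : List ℕ} {x : ℕ} (hx : x ∈ mergeList l) :
    x ∈ l ∨ ∃ a ∈ l, ∃ b ∈ l, x = a + b := by
  match l with
  | [] => exact Or.inl hx
  | [a] => exact Or.inl hx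
  | c :: b :: t =>
    simp only [mergeList, List.mem_append, List.mem_singleton] at hx
    rcases hx with hx | hx
    · exact Or.inl (List.mem_cons_of_mem c (List.dropLast_sublist _ |>.mem hx))
    · exact Or.inr ⟨(b :: t).getLast (List.cons_ne_nil b t),
        List.mem_cons_of_mem c (List.getLast_mem _), c, List.mem_cons_self, hx⟩

lemma mergeList_sorted {l : List ℕ} (hl : l.Pairwise (· ≤ ·)) :
    (mergeList l).Pairwise (· ≤ ·) := by
  match l with
  | [] => exact hl
  | [a] => exact hl
  | c :: b :: t =>
    have hbt : (b :: t).Pairwise (· ≤ ·) := hl.of_cons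
    have h := List.dropLast_append_getLast (l := b :: t) (List.cons_ne_nil b t)
    rw [← h] at hbt
    rw [List.pairwise_append] at hbt
    show ((b :: t).dropLast ++ [(b :: t).getLast _ + c]).Pairwise (· ≤ ·)
    rw [List.pairwise_append]
    refine ⟨hbt.1, List.pairwise_singleton _ _, fun x hx y hy => ?_⟩
    simp only [List.mem_singleton] at hy
    subst hy
    have := hbt.2.2 x hx _ (List.mem_singleton_self _)
    omega

/-- Merging preserves the partition of `q`. -/
def mergeP (q : ℕ) (P : Nat.Partition q) : Nat.Partition q where
  parts := ↑(mergeList (P.parts.sort (· ≤ ·)))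
  parts_pos := by
    intro i hi
    rw [Multiset.mem_coe] at hi
    rcases mergeList_mem hi with h | ⟨a, ha, b, hb, rfl⟩
    · exact P.parts_pos ((Multiset.mem_sort _).1 h)
    · have := P.parts_pos ((Multiset.mem_sort _).1 ha)
      omega
  parts_sum := by
    rw [Multiset.sum_coe, mergeList_sum]
    have : ((P.parts.sort (· ≤ ·) : List ℕ) : Multiset ℕ).sum = P.parts.sum := by
      rw [Multiset.sort_eq]
    rw [Multiset.sum_coe] at this
    rw [this, P.parts_sum]

theorem stmt17 (q r : ℕ) (hq : 1 ≤ q) (hr : 1 ≤ r)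
    (y : ℕ → ℕ)
    (hy : ∀ m, y m = ((Finset.univ : Finset (Nat.Partition q)).filter
        fun P => Multiset.card P.parts = m).card) :
    y (r + 1) ≤ q * y r := by
  classical
  rw [hy, hy]
  set A := (Finset.univ : Finset (Nat.Partition q)).filter
      fun P => Multiset.card P.parts = r + 1 with hA
  set B := (Finset.univ : Finset (Nat.Partition q)).filter
      fun P => Multiset.card P.parts = r with hB
  have key : A.card ≤ (B ×ˢ Finset.range q).card := by
    apply Finset.card_le_card_of_injOn
      (fun P => (mergeP q P, (P.parts.sort (· ≤ ·)).headI - 1))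
    · -- maps to
      intro P hP
      simp only [hA, Finset.mem_coe, Finset.mem_filter] at hP
      have hlen : (P.parts.sort (· ≤ ·)).length = r + 1 := by
        rw [Multiset.length_sort, hP.2]
      obtain ⟨c, b, t, hl⟩ : ∃ c b t, P.parts.sort (· ≤ ·) = c :: b :: t := by
        match h : P.parts.sort (· ≤ ·) with
        | [] => rw [h] at hlen; simp at hlen
        | [a] => rw [h] at hlen; simp at hlen; omega
        | c :: b :: t => exact ⟨c, b, t, rfl⟩
      rw [Finset.mem_coe, Finset.mem_product, hB, Finset.mem_filter]
      refine ⟨⟨Finset.mem_univ _, ?_⟩, ?_⟩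
      · show Multiset.card ((mergeList (P.parts.sort (· ≤ ·)) : List ℕ) : Multiset ℕ) = r
        rw [Multiset.coe_card, hl]
        simp only [mergeList, List.length_append, List.length_dropLast, List.length_cons,
          List.length_singleton]
        rw [hl] at hlen
        simp at hlen
        simp
        omega
      · beta_reduce
        rw [Finset.mem_range, hl]
        have hcmem : c ∈ P.parts := (Multiset.mem_sort _).1 (by rw [hl]; exact List.mem_cons_self)
        have hcpos : 0 < c := P.parts_pos hcmem
        have hsum : (P.parts.sort (· ≤ ·)).sum = q := by
          have : ((P.parts.sort (· ≤ ·) : List ℕ) : Multiset ℕ).sum = P.parts.sum := by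
            rw [Multiset.sort_eq]
          rw [Multiset.sum_coe] at this
          rw [this, P.parts_sum]
        rw [hl] at hsum
        simp only [List.sum_cons] at hsum
        simp only [List.headI]
        omega
    · -- injective
      intro P₁ hP₁ P₂ hP₂ heq
      simp only [Finset.mem_coe, hA, Finset.mem_filter] at hP₁ hP₂
      have hlen₁ : (P₁.parts.sort (· ≤ ·)).length = r + 1 := by
        rw [Multiset.length_sort, hP₁.2]
      have hlen₂ : (P₂.parts.sort (· ≤ ·)).length = r + 1 := by
        rw [Multiset.length_sort, hP₂.2]
      obtain ⟨c₁, b₁, t₁, hl₁⟩ : ∃ c b t, P₁.parts.sort (· ≤ ·) = c :: b :: t := by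
        match h : P₁.parts.sort (· ≤ ·) with
        | [] => rw [h] at hlen₁; simp at hlen₁
        | [a] => rw [h] at hlen₁; simp at hlen₁; omega
        | c :: b :: t => exact ⟨c, b, t, rfl⟩
      obtain ⟨c₂, b₂, t₂, hl₂⟩ : ∃ c b t, P₂.parts.sort (· ≤ ·) = c :: b :: t := by
        match h : P₂.parts.sort (· ≤ ·) with
        | [] => rw [h] at hlen₂; simp at hlen₂
        | [a] => rw [h] at hlen₂; simp at hlen₂; omega
        | c :: b :: t => exact ⟨c, b, t, rfl⟩
      simp only [Prod.mk.injEq] at heq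
      obtain ⟨hmerge, hhead⟩ := heq
      -- c₁ = c₂
      have hc₁pos : 0 < c₁ := P₁.parts_pos ((Multiset.mem_sort _).1
        (by rw [hl₁]; exact List.mem_cons_self))
      have hc₂pos : 0 < c₂ := P₂.parts_pos ((Multiset.mem_sort _).1
        (by rw [hl₂]; exact List.mem_cons_self))
      rw [hl₁, hl₂] at hhead
      simp only [List.headI] at hhead
      have hc : c₁ = c₂ := by omega
      -- merged multisets equal ⇒ merged lists equal (both sorted)
      have hparts : ((mergeList (P₁.parts.sort (· ≤ ·)) : List ℕ) : Multiset ℕ)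
          = ((mergeList (P₂.parts.sort (· ≤ ·)) : List ℕ) : Multiset ℕ) :=
        congrArg Nat.Partition.parts hmerge
      rw [Multiset.coe_eq_coe] at hparts
      have hlisteq : mergeList (P₁.parts.sort (· ≤ ·)) = mergeList (P₂.parts.sort (· ≤ ·)) :=
        List.Perm.eq_of_pairwise'
          (mergeList_sorted (Multiset.pairwise_sort _ _))
          (mergeList_sorted (Multiset.pairwise_sort _ _)) hparts
      rw [hl₁, hl₂] at hlisteq
      simp only [mergeList] at hlisteq
      have hsuf := List.append_inj' hlisteq (by simp)
      obtain ⟨hdrop, hlast⟩ := hsuf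
      simp only [List.cons.injEq] at hlast
      have hlast' : (b₁ :: t₁).getLast (List.cons_ne_nil b₁ t₁)
          = (b₂ :: t₂).getLast (List.cons_ne_nil b₂ t₂) := by omega
      have hbt : (b₁ :: t₁) = (b₂ :: t₂) := by
        rw [← List.dropLast_append_getLast (List.cons_ne_nil b₁ t₁),
          ← List.dropLast_append_getLast (List.cons_ne_nil b₂ t₂), hdrop, hlast']
      have hsort : P₁.parts.sort (· ≤ ·) = P₂.parts.sort (· ≤ ·) := by
        rw [hl₁, hl₂, hc, hbt]
      apply Nat.Partition.ext
      rw [← Multiset.sort_eq P₁.parts (· ≤ ·), ← Multiset.sort_eq P₂.parts (· ≤ ·), hsort]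
  calc A.card ≤ (B ×ˢ Finset.range q).card := key
    _ = B.card * q := by rw [Finset.card_product, Finset.card_range]
    _ = q * B.card := Nat.mul_comm _ _
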